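/- Let v ∈ E with v ≠ 0, x ∈ E, b > 0, and let γ(s) = x + s·v for s ∈ [0,b]. Let ν be the Borel measure on (0,b) given by ν = g·λ + 2‖v‖·μ_γ, where λ is Lebesgue measure on (0,b), g(s) = ∫_{p ∉ γ([0,b])} (‖v‖²·‖γ(s) − p‖² − ⟨v, γ(s) − p⟩²)/‖γ(s) − p‖³ dμ(p), and μ_γ is the measure on (0,b) defined by μ_γ(B) = μ(γ(B)) for Borel B ⊆ (0,b). Then for every t ∈ [0,b], f(x + t·v) = f(x) + (⟨v, H(x)⟩ + μ({x})·‖v‖)·t + ∫_{(0,t)} (t − s) dν(s). -/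

import Mathlib

open MeasureTheory Metric
open scoped RealInnerProductSpace ENNReal

section Aux
variable {E : Type*} [NormedAddCommGroup E] [InnerProductSpace ℝ E]

namespace Stmt9Aux

/-- the Hessian-type integrand -/
noncomputable def KK (v c : E) (s : ℝ) : ℝ :=
  (‖v‖ ^ 2 * ‖c + s • v‖ ^ 2 - ⟪v, c + s • v⟫ ^ 2) / ‖c + s • v‖ ^ 3

noncomputable def h1 (v c : E) (s : ℝ) : ℝ := ⟪v, c + s • v⟫ / ‖c + s • v‖

lemma KK_nonneg (v c : E) (s : ℝ) : 0 ≤ KK v c s := by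
  apply div_nonneg _ (by positivity)
  have h := real_inner_mul_inner_self_le v (c + s • v)
  rw [real_inner_self_eq_norm_sq, real_inner_self_eq_norm_sq] at h
  nlinarith [h]

lemma abs_h1_le (v c : E) (s : ℝ) : |h1 v c s| ≤ ‖v‖ := by
  rcases eq_or_ne (c + s • v) 0 with h | h
  · simp [h1, h, norm_nonneg]
  · rw [h1, abs_div, abs_of_nonneg (norm_nonneg _),
      div_le_iff₀ (norm_pos_iff.mpr h)]
    exact abs_real_inner_le_norm _ _

lemma psi_eq (v c : E) (s : ℝ) :
    ‖c‖ ^ 2 + 2 * ⟪v, c⟫ * s + ‖v‖ ^ 2 * s ^ 2 = ‖c + s • v‖ ^ 2 := by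
  rw [norm_add_sq_real, real_inner_smul_right, norm_smul, mul_pow, Real.norm_eq_abs, sq_abs,
    real_inner_comm c v]
  ring

lemma hasDerivAt_norm_line {v c : E} {s : ℝ} (h : c + s • v ≠ 0) :
    HasDerivAt (fun u => ‖c + u • v‖) (h1 v c s) s := by
  have hψ : ∀ u : ℝ, ‖c + u • v‖ = Real.sqrt (‖c‖ ^ 2 + 2 * ⟪v, c⟫ * u + ‖v‖ ^ 2 * u ^ 2) := by
    intro u
    rw [psi_eq, Real.sqrt_sq (norm_nonneg _)]
  have hψpos : 0 < ‖c‖ ^ 2 + 2 * ⟪v, c⟫ * s + ‖v‖ ^ 2 * s ^ 2 := by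
    rw [psi_eq]; exact pow_pos (norm_pos_iff.mpr h) 2
  have hpoly : HasDerivAt (fun u : ℝ => ‖c‖ ^ 2 + 2 * ⟪v, c⟫ * u + ‖v‖ ^ 2 * u ^ 2)
      (2 * ⟪v, c⟫ + ‖v‖ ^ 2 * (2 * s)) s := by
    have h1' := ((hasDerivAt_id s).const_mul (2 * ⟪v, c⟫)).const_add (‖c‖ ^ 2)
    have h2' := ((hasDerivAt_pow 2 s).const_mul (‖v‖ ^ 2))
    exact (h1'.add h2').congr_deriv (by simp)
  have hsqrt := (Real.hasDerivAt_sqrt (ne_of_gt hψpos)).comp s hpoly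
  have heq : (fun u => ‖c + u • v‖) =
      (Real.sqrt ∘ fun u : ℝ => ‖c‖ ^ 2 + 2 * ⟪v, c⟫ * u + ‖v‖ ^ 2 * u ^ 2) := by
    funext u; exact hψ u
  rw [heq]
  refine hsqrt.congr_deriv ?_; symm
  have hs : Real.sqrt (‖c‖ ^ 2 + 2 * ⟪v, c⟫ * s + ‖v‖ ^ 2 * s ^ 2) = ‖c + s • v‖ := by
    rw [psi_eq, Real.sqrt_sq (norm_nonneg _)]
  rw [h1, hs]
  have hinner : ⟪v, c + s • v⟫ = ⟪v, c⟫ + ‖v‖ ^ 2 * s := by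
    rw [inner_add_right, real_inner_smul_right, real_inner_self_eq_norm_sq]; ring
  have hn : ‖c + s • v‖ ≠ 0 := norm_ne_zero_iff.mpr h
  field_simp [hinner]
  exact hinner

lemma hasDerivAt_h1 {v c : E} {s : ℝ} (h : c + s • v ≠ 0) :
    HasDerivAt (h1 v c) (KK v c s) s := by
  have hinner : ∀ u : ℝ, ⟪v, c + u • v⟫ = ⟪v, c⟫ + ‖v‖ ^ 2 * u := by
    intro u
    rw [inner_add_right, real_inner_smul_right, real_inner_self_eq_norm_sq]; ring
  have hnum : HasDerivAt (fun u : ℝ => ⟪v, c + u • v⟫) (‖v‖ ^ 2) s := by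
    have : HasDerivAt (fun u : ℝ => ⟪v, c⟫ + ‖v‖ ^ 2 * u) (‖v‖ ^ 2) s := by
      simpa using ((hasDerivAt_id s).const_mul (‖v‖ ^ 2)).const_add ⟪v, c⟫
    exact this.congr_of_eventuallyEq (Filter.Eventually.of_forall fun u => (hinner u))
  have hden := hasDerivAt_norm_line h
  have hn : ‖c + s • v‖ ≠ 0 := norm_ne_zero_iff.mpr h
  have hd := hnum.div hden hn
  refine hd.congr_deriv ?_; symm
  rw [KK, h1]
  have hcs := abs_real_inner_le_norm v (c + s • v)
  field_simp

lemma continuousOn_KK {v c : E} {t : ℝ} (hc : ∀ s ∈ Set.Icc (0:ℝ) t, c + s • v ≠ 0) :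
    ContinuousOn (KK v c) (Set.Icc 0 t) := by
  have hcont : Continuous fun s : ℝ => c + s • v := by continuity
  apply ContinuousOn.div
  · exact ((continuous_const.mul (hcont.norm.pow 2)).sub
      ((continuous_const.inner hcont).pow 2)).continuousOn
  · exact (hcont.norm.pow 3).continuousOn
  · intro s hs
    exact pow_ne_zero _ (norm_ne_zero_iff.mpr (hc s hs))

/-- Taylor formula with integral remainder along the line. -/
lemma taylor_line {v c : E} {t : ℝ} (ht : 0 ≤ t)
    (hc : ∀ s ∈ Set.Icc (0:ℝ) t, c + s • v ≠ 0) :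
    ∫ s in (0:ℝ)..t, (t - s) * KK v c s
      = ‖c + t • v‖ - ‖c‖ - t * (⟪v, c⟫ / ‖c‖) := by
  have huIcc : Set.uIcc (0:ℝ) t = Set.Icc 0 t := Set.uIcc_of_le ht
  have hderiv : ∀ s ∈ Set.uIcc (0:ℝ) t,
      HasDerivAt (fun u => (t - u) * h1 v c u + ‖c + u • v‖) ((t - s) * KK v c s) s := by
    intro s hs
    rw [huIcc] at hs
    have h1d := hasDerivAt_h1 (hc s hs)
    have hnd := hasDerivAt_norm_line (hc s hs)
    have hlin : HasDerivAt (fun u : ℝ => t - u) (-1) s := by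
      simpa using (hasDerivAt_id s).const_sub t
    have := (hlin.mul h1d).add hnd
    refine this.congr_deriv ?_; symm
    ring
  have hint : IntervalIntegrable (fun s => (t - s) * KK v c s) volume 0 t := by
    apply ContinuousOn.intervalIntegrable
    rw [huIcc]
    exact (continuous_const.sub continuous_id).continuousOn.mul (continuousOn_KK hc)
  have := intervalIntegral.integral_eq_sub_of_hasDerivAt hderiv hint
  rw [this]
  have h0 : c + (0:ℝ) • v = c := by simp
  simp only [sub_self, zero_mul, zero_add, h1, h0]
  ring

lemma integral_KK {v c : E} {t : ℝ} (ht : 0 ≤ t)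
    (hc : ∀ s ∈ Set.Icc (0:ℝ) t, c + s • v ≠ 0) :
    ∫ s in (0:ℝ)..t, KK v c s = h1 v c t - h1 v c 0 := by
  have huIcc : Set.uIcc (0:ℝ) t = Set.Icc 0 t := Set.uIcc_of_le ht
  apply intervalIntegral.integral_eq_sub_of_hasDerivAt
  · intro s hs; rw [huIcc] at hs; exact hasDerivAt_h1 (hc s hs)
  · apply ContinuousOn.intervalIntegrable; rw [huIcc]; exact continuousOn_KK hc

lemma integral_KK_le {v c : E} {t : ℝ} (ht : 0 ≤ t)
    (hc : ∀ s ∈ Set.Icc (0:ℝ) t, c + s • v ≠ 0) :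
    ∫ s in (0:ℝ)..t, KK v c s ≤ 2 * ‖v‖ := by
  rw [integral_KK ht hc]
  have h1b := abs_h1_le v c t
  have h2b := abs_h1_le v c 0
  rw [abs_le] at h1b h2b
  linarith [h1b.1, h1b.2, h2b.1, h2b.2]

end Stmt9Aux
end Aux

lemma measure_compl_pos_nhds_zero {X : Type*} [TopologicalSpace X] [MeasurableSpace X]
    [OpensMeasurableSpace X] [SecondCountableTopology X] (μ : Measure X) :
    μ {x : X | ∀ U ∈ nhds x, 0 < μ U}ᶜ = 0 := by
  obtain ⟨B, hBc, -, hB⟩ := TopologicalSpace.exists_countable_basis X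
  have hsub : {x : X | ∀ U ∈ nhds x, 0 < μ U}ᶜ ⊆ ⋃₀ {U ∈ B | μ U = 0} := by
    intro y hy
    simp only [Set.mem_compl_iff, Set.mem_setOf_eq, not_forall] at hy
    obtain ⟨U, hU, hU0⟩ := hy
    have hU0' : μ U = 0 := by
      simpa [pos_iff_ne_zero, not_not] using hU0
    obtain ⟨V, hVB, hyV, hVU⟩ := hB.mem_nhds_iff.mp hU
    exact ⟨V, ⟨hVB, le_antisymm (le_trans (measure_mono hVU) hU0'.le) (zero_le)⟩, hyV⟩
  refine measure_mono_null hsub ?_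
  rw [measure_sUnion_null_iff (hBc.mono (Set.sep_subset _ _))]
  exact fun U hU => hU.2

set_option maxHeartbeats 1000000 in
theorem stmt9 {n : ℕ} (hn : 1 ≤ n) (a : EuclideanSpace ℝ (Fin n)) (ρ : ℝ) (hρ : 0 < ρ)
    (μ : Measure (EuclideanSpace ℝ (Fin n))) [IsProbabilityMeasure μ]
    (hsupp : {x : EuclideanSpace ℝ (Fin n) | ∀ U ∈ nhds x, 0 < μ U} ⊆ ball a ρ)
    (f : EuclideanSpace ℝ (Fin n) → ℝ)
    (hf : ∀ x, f x = ∫ p, ‖x - p‖ ∂μ)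
    (H : EuclideanSpace ℝ (Fin n) → EuclideanSpace ℝ (Fin n))
    (hH : ∀ x, H x = ∫ p in ({x}ᶜ : Set (EuclideanSpace ℝ (Fin n))), ‖x - p‖⁻¹ • (x - p) ∂μ)
    (x v : EuclideanSpace ℝ (Fin n)) (hv : v ≠ 0) (b : ℝ) (hb : 0 < b)
    (γ : ℝ → EuclideanSpace ℝ (Fin n)) (hγ : ∀ s, γ s = x + s • v)
    (g : ℝ → ℝ)
    (hg : ∀ s, g s = ∫ p in (γ '' Set.Icc 0 b)ᶜ,
      (‖v‖ ^ 2 * ‖γ s - p‖ ^ 2 - ⟪v, γ s - p⟫ ^ 2) / ‖γ s - p‖ ^ 3 ∂μ)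
    (ν : Measure ℝ)
    (hν : ∀ B : Set ℝ, MeasurableSet B →
      ν B = (∫⁻ s in B ∩ Set.Ioo 0 b, ENNReal.ofReal (g s)) +
        ENNReal.ofReal (2 * ‖v‖) * μ (γ '' (B ∩ Set.Ioo 0 b))) :
    ∀ t ∈ Set.Icc (0 : ℝ) b,
      f (x + t • v) = f x + (⟪v, H x⟫ + (μ {x}).toReal * ‖v‖) * t +
        ∫ s in Set.Ioo (0 : ℝ) t, (t - s) ∂ν := by
  classical
  have hγ' : γ = fun s => x + s • v := funext hγ
  subst hγ'
  intro t ht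
  obtain ⟨ht0, htb⟩ := ht
  have hvn : (0:ℝ) < ‖v‖ := norm_pos_iff.mpr hv
  -- support
  have hball : μ (ball a ρ)ᶜ = 0 :=
    measure_mono_null (Set.compl_subset_compl.mpr hsupp) (measure_compl_pos_nhds_zero μ)
  have haeball : ∀ᵐ p ∂μ, p ∈ ball a ρ := by
    rw [MeasureTheory.ae_iff]
    exact hball
  -- basic objects
  have hrw : ∀ (s : ℝ) (p : EuclideanSpace ℝ (Fin n)), x + s • v - p = (x - p) + s • v := by
    intro s p; abel
  have hγcont : Continuous (fun s : ℝ => x + s • v) :=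
    continuous_const.add (continuous_id.smul continuous_const)
  set A : Set (EuclideanSpace ℝ (Fin n)) := (fun s : ℝ => x + s • v) '' Set.Icc 0 b with hAdef
  have hAmeas : MeasurableSet A := ((isCompact_Icc).image hγcont).isClosed.measurableSet
  set σ : EuclideanSpace ℝ (Fin n) → ℝ := fun p => ⟪v, p - x⟫ / ‖v‖ ^ 2 with hσdef
  have hσcont : Continuous σ := by
    exact (continuous_const.inner (continuous_id.sub continuous_const)).div_const _
  have hσmeas : Measurable σ := hσcont.measurable
  have hσγ : ∀ s : ℝ, σ (x + s • v) = s := by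
    intro s
    rw [hσdef]
    simp only [add_sub_cancel_left, real_inner_smul_right, real_inner_self_eq_norm_sq]
    field_simp
  have himg : ∀ T : Set ℝ, T ⊆ Set.Icc 0 b →
      (fun s : ℝ => x + s • v) '' T = A ∩ σ ⁻¹' T := by
    intro T hT
    ext p
    constructor
    · rintro ⟨s, hs, rfl⟩
      exact ⟨⟨s, hT hs, rfl⟩, by simpa [hσγ s] using hs⟩
    · rintro ⟨⟨s, hs, rfl⟩, hp⟩
      exact ⟨s, by simpa [hσγ s] using hp, rfl⟩
  -- K, D, R
  set K : ℝ → EuclideanSpace ℝ (Fin n) → ℝ := fun s p => Stmt9Aux.KK v (x - p) s with hKdef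
  have hKmeas : Measurable (Function.uncurry K) := by
    have hw : Continuous (fun q : ℝ × EuclideanSpace ℝ (Fin n) => (x - q.2) + q.1 • v) :=
      (continuous_const.sub continuous_snd).add (continuous_fst.smul continuous_const)
    exact (((continuous_const.mul (hw.norm.pow 2)).sub
      ((continuous_const.inner hw).pow 2)).measurable).div ((hw.norm.pow 3)).measurable
  have hKsmeas : ∀ s, Measurable (K s) := by
    intro s
    have hw : Continuous (fun p : EuclideanSpace ℝ (Fin n) => (x - p) + s • v) :=
      (continuous_const.sub continuous_id).add continuous_const
    exact (((continuous_const.mul (hw.norm.pow 2)).sub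
      ((continuous_const.inner hw).pow 2)).measurable).div ((hw.norm.pow 3)).measurable
  set D : EuclideanSpace ℝ (Fin n) → ℝ :=
    fun p => if p = x then ‖v‖ else ⟪v, x - p⟫ / ‖x - p‖ with hDdef
  have hDmeas : Measurable D := by
    apply Measurable.ite
    · exact MeasurableSet.singleton x
    · exact measurable_const
    · exact ((continuous_const.inner (continuous_const.sub continuous_id)).measurable).div
        ((continuous_const.sub continuous_id).norm.measurable)
  have hDbound : ∀ p, |D p| ≤ ‖v‖ := by
    intro p
    rw [hDdef]
    by_cases hp : p = x
    · simp [hp, abs_of_nonneg (norm_nonneg v)]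
    · simp only [if_neg hp]
      rcases eq_or_ne (x - p) 0 with h | h
      · simp [h, norm_nonneg]
      · rw [abs_div, abs_of_nonneg (norm_nonneg _), div_le_iff₀ (norm_pos_iff.mpr h)]
        exact abs_real_inner_le_norm _ _
  set R : EuclideanSpace ℝ (Fin n) → ℝ :=
    fun p => ‖x + t • v - p‖ - ‖x - p‖ - t * D p with hRdef
  have hRmeas : Measurable R := by
    apply Measurable.sub
    · exact ((continuous_const.sub continuous_id).norm.measurable).sub
        ((continuous_const.sub continuous_id).norm.measurable)
    · exact hDmeas.const_mul t
  have hRbound : ∀ p, |R p| ≤ 2 * (t * ‖v‖) := by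
    intro p
    rw [hRdef]
    have h1 : |‖x + t • v - p‖ - ‖x - p‖| ≤ ‖t • v‖ := by
      have := abs_norm_sub_norm_le (x + t • v - p) (x - p)
      simpa [hrw t p, add_sub_cancel_left] using this
    have h2 : |t * D p| ≤ t * ‖v‖ := by
      rw [abs_mul, abs_of_nonneg ht0]
      exact mul_le_mul_of_nonneg_left (hDbound p) ht0
    have h3 : ‖t • v‖ = t * ‖v‖ := by
      rw [norm_smul, Real.norm_eq_abs, abs_of_nonneg ht0]
    calc |‖x + t • v - p‖ - ‖x - p‖ - t * D p|
        ≤ |‖x + t • v - p‖ - ‖x - p‖| + |t * D p| := abs_sub _ _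
      _ ≤ t * ‖v‖ + t * ‖v‖ := by rw [← h3]; exact add_le_add h1 (h3 ▸ h2)
      _ = 2 * (t * ‖v‖) := by ring
  -- pointwise facts off the segment
  have hnotA : ∀ p ∉ A, ∀ s ∈ Set.Icc (0:ℝ) b, (x - p) + s • v ≠ 0 := by
    intro p hp s hs h0
    apply hp
    refine ⟨s, hs, ?_⟩
    have h1 : x + s • v - p = 0 := by rw [hrw s p, h0]
    exact sub_eq_zero.mp h1
  have hpx : ∀ p ∉ A, p ≠ x := by
    intro p hp he
    apply hp
    exact ⟨0, ⟨le_refl 0, hb.le⟩, by simp [he]⟩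
  have hRA : ∀ p ∉ A, R p = ∫ s in (0:ℝ)..t, (t - s) * K s p := by
    intro p hp
    have hc : ∀ s ∈ Set.Icc (0:ℝ) t, (x - p) + s • v ≠ 0 := fun s hs =>
      hnotA p hp s ⟨hs.1, hs.2.trans htb⟩
    have ht' := Stmt9Aux.taylor_line (v := v) (c := x - p) ht0 hc
    simp only [hKdef, hRdef]
    rw [ht', hrw t p, hDdef]
    simp only [if_neg (hpx p hp)]
  have hγinj : ∀ s₁ s₂ : ℝ, x + s₁ • v = x + s₂ • v → s₁ = s₂ := by
    intro s₁ s₂ h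
    have h2 := congrArg σ h
    rwa [hσγ, hσγ] at h2
  have hDval : ∀ s₀ : ℝ, 0 < s₀ → D (x + s₀ • v) = -‖v‖ := by
    intro s₀ h0
    have hpne : x + s₀ • v ≠ x := by
      intro h
      have h' : x + s₀ • v = x + (0:ℝ) • v := by simpa using h
      have := hγinj _ _ h'
      linarith
    have he2 : x - (x + s₀ • v) = (-s₀) • v := by rw [neg_smul]; abel
    rw [hDdef]
    simp only [if_neg hpne]
    rw [he2, real_inner_smul_right, real_inner_self_eq_norm_sq, norm_smul, Real.norm_eq_abs,
      abs_neg, abs_of_pos h0]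
    field_simp
  have hRA1 : ∀ p ∈ (fun s : ℝ => x + s • v) '' Set.Ioo 0 t, R p = 2 * ‖v‖ * (t - σ p) := by
    rintro p ⟨s₀, hs₀, rfl⟩
    have he1 : x + t • v - (x + s₀ • v) = (t - s₀) • v := by rw [sub_smul]; abel
    have he2 : x - (x + s₀ • v) = (-s₀) • v := by rw [neg_smul]; abel
    simp only [hRdef]
    rw [hσγ, hDval s₀ hs₀.1, he1, he2, norm_smul, norm_smul, Real.norm_eq_abs, Real.norm_eq_abs,
      abs_of_nonneg (sub_nonneg.mpr hs₀.2.le), abs_neg, abs_of_pos hs₀.1]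
    ring
  have hRA2 : ∀ p ∈ A \ ((fun s : ℝ => x + s • v) '' Set.Ioo 0 t), R p = 0 := by
    rintro p ⟨⟨s₀, hs₀, rfl⟩, hnot⟩
    have hs₀' : s₀ ∉ Set.Ioo 0 t := fun hmem => hnot ⟨s₀, hmem, rfl⟩
    rcases eq_or_lt_of_le hs₀.1 with h0 | h0
    · have hp0 : x + s₀ • v = x := by rw [← h0, zero_smul, add_zero]
      simp only [hRdef, hp0]
      rw [hDdef]
      simp only [if_pos rfl, sub_self, norm_zero, add_sub_cancel_left, norm_smul,
        Real.norm_eq_abs, abs_of_nonneg ht0]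
      simp
    · have hts : t ≤ s₀ := by
        by_contra hlt
        exact hs₀' ⟨h0, lt_of_not_ge hlt⟩
      have he1 : x + t • v - (x + s₀ • v) = (t - s₀) • v := by rw [sub_smul]; abel
      have he2 : x - (x + s₀ • v) = (-s₀) • v := by rw [neg_smul]; abel
      simp only [hRdef]
      rw [hDval s₀ h0, he1, he2, norm_smul, norm_smul, Real.norm_eq_abs, Real.norm_eq_abs,
        abs_neg, abs_of_pos h0, abs_of_nonpos (by linarith)]
      ring
  have hRnonneg : ∀ p, 0 ≤ R p := by
    intro p
    by_cases hp : p ∈ A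
    · by_cases hpt : p ∈ (fun s : ℝ => x + s • v) '' Set.Ioo 0 t
      · obtain ⟨s₀, hs₀, rfl⟩ := hpt
        rw [hRA1 _ ⟨s₀, hs₀, rfl⟩, hσγ]
        have : (0:ℝ) ≤ t - s₀ := by linarith [hs₀.2]
        positivity
      · rw [hRA2 p ⟨hp, hpt⟩]
    · rw [hRA p hp]
      apply intervalIntegral.integral_nonneg ht0
      intro u hu
      exact mul_nonneg (sub_nonneg.mpr hu.2) (by simp only [hKdef]; exact Stmt9Aux.KK_nonneg _ _ _)
  -- integrability
  have hRint : Integrable R μ :=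
    Integrable.mono' (integrable_const (2 * (t * ‖v‖))) hRmeas.aestronglyMeasurable
      (Filter.Eventually.of_forall fun p => by rw [Real.norm_eq_abs]; exact hRbound p)
  have hnormint : ∀ y : EuclideanSpace ℝ (Fin n), Integrable (fun p => ‖y - p‖) μ := by
    intro y
    apply Integrable.mono' (integrable_const (‖y - a‖ + ρ))
    · exact ((continuous_const.sub continuous_id).norm).aestronglyMeasurable
    · filter_upwards [haeball] with p hp
      rw [Real.norm_eq_abs, abs_of_nonneg (norm_nonneg _)]
      have h1 : ‖y - p‖ ≤ ‖y - a‖ + ‖a - p‖ := by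
        have := norm_sub_le (y - a) (p - a)
        calc ‖y - p‖ = ‖(y - a) - (p - a)‖ := by congr 1; abel
          _ ≤ ‖y - a‖ + ‖p - a‖ := norm_sub_le _ _
          _ = ‖y - a‖ + ‖a - p‖ := by rw [norm_sub_rev p a]
      have h2 : ‖a - p‖ ≤ ρ := by
        rw [← dist_eq_norm]
        exact le_of_lt (by rwa [mem_ball, dist_comm] at hp)
      linarith
  have hDint : Integrable D μ :=
    Integrable.mono' (integrable_const ‖v‖) hDmeas.aestronglyMeasurable
      (Filter.Eventually.of_forall fun p => by rw [Real.norm_eq_abs]; exact hDbound p)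
  -- inner product with H x
  have hHint : Integrable (fun p => ‖x - p‖⁻¹ • (x - p)) (μ.restrict {x}ᶜ) := by
    apply Integrable.mono' (integrable_const (1:ℝ))
    · exact (((continuous_const.sub continuous_id).norm.measurable.inv).smul
        (continuous_const.sub continuous_id).measurable).aestronglyMeasurable
    · apply Filter.Eventually.of_forall
      intro p
      rw [norm_smul]
      rcases eq_or_ne (x - p) 0 with h | h
      · simp [h]
      · rw [norm_inv, norm_norm, inv_mul_cancel₀ (norm_ne_zero_iff.mpr h)]
  have hvH : ⟪v, H x⟫ = ∫ p in ({x}ᶜ : Set (EuclideanSpace ℝ (Fin n))), D p ∂μ := by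
    rw [hH x, ← integral_inner hHint v]
    apply setIntegral_congr_fun (measurableSet_singleton x).compl
    intro p hp
    have hpne : p ≠ x := hp
    show ⟪v, ‖x - p‖⁻¹ • (x - p)⟫ = D p
    rw [real_inner_smul_right, hDdef]
    simp only [if_neg hpne]
    rw [div_eq_inv_mul]
  have hDsum : ∫ p, D p ∂μ = ⟪v, H x⟫ + (μ {x}).toReal * ‖v‖ := by
    have h1 : ∫ p in ({x} : Set (EuclideanSpace ℝ (Fin n))), D p ∂μ = (μ {x}).toReal * ‖v‖ := by
      rw [integral_singleton, hDdef]
      simp [smul_eq_mul, Measure.real]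
    rw [← integral_add_compl (measurableSet_singleton x) hDint, h1, hvH]
    ring
  -- decomposition of the main integral
  have hmain : ∫ p, ‖x + t • v - p‖ ∂μ =
      (∫ p, ‖x - p‖ ∂μ) + t * (∫ p, D p ∂μ) + ∫ p, R p ∂μ := by
    have hptw : (fun p : EuclideanSpace ℝ (Fin n) => ‖x + t • v - p‖) =
        fun p => (‖x - p‖ + t * D p) + R p := by
      funext p
      simp only [hRdef]
      ring
    have hint1 : Integrable (fun p => ‖x - p‖ + t * D p) μ := (hnormint x).add (hDint.const_mul t)
    rw [hptw, integral_add hint1 hRint, integral_add (hnormint x) (hDint.const_mul t),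
      integral_const_mul]
  -- sets along the segment
  have hIoo_sub : Set.Ioo (0:ℝ) t ⊆ Set.Ioo 0 b := Set.Ioo_subset_Ioo le_rfl htb
  set Ao : Set (EuclideanSpace ℝ (Fin n)) := (fun s : ℝ => x + s • v) '' Set.Ioo 0 b with hAodef
  set At : Set (EuclideanSpace ℝ (Fin n)) := (fun s : ℝ => x + s • v) '' Set.Ioo 0 t with hAtdef
  have hAo : Ao = A ∩ σ ⁻¹' Set.Ioo 0 b := himg _ Set.Ioo_subset_Icc_self
  have hAt : At = A ∩ σ ⁻¹' Set.Ioo 0 t :=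
    himg _ (subset_trans hIoo_sub Set.Ioo_subset_Icc_self)
  have hAomeas : MeasurableSet Ao := by rw [hAo]; exact hAmeas.inter (hσmeas measurableSet_Ioo)
  have hAtmeas : MeasurableSet At := by rw [hAt]; exact hAmeas.inter (hσmeas measurableSet_Ioo)
  have hAtsub : At ⊆ A := by rw [hAt]; exact Set.inter_subset_left
  -- g in terms of K
  have hgK : g = fun s => ∫ p in Aᶜ, K s p ∂μ := by
    funext s
    rw [hg s]
    refine integral_congr_ae (Filter.Eventually.of_forall fun p => ?_)
    simp only [hKdef, Stmt9Aux.KK, hrw s p]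
  have hgm : Measurable g := by
    rw [hgK]
    exact (StronglyMeasurable.integral_prod_right' (hKmeas.stronglyMeasurable)).measurable
  set L : ℝ → ℝ≥0∞ := fun s => ∫⁻ p in Aᶜ, ENNReal.ofReal (K s p) ∂μ with hLdef
  have hLmeas : Measurable L := by
    apply Measurable.lintegral_prod_right
    exact ENNReal.measurable_ofReal.comp hKmeas
  have hgL : ∀ s, g s = (L s).toReal := by
    intro s
    rw [hgK]
    exact integral_eq_lintegral_of_nonneg_ae
      (Filter.Eventually.of_forall fun p => by
        simp only [hKdef]; exact Stmt9Aux.KK_nonneg _ _ _)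
      (hKsmeas s).aestronglyMeasurable
  have hKofReal : Measurable (Function.uncurry fun s p => ENNReal.ofReal (K s p)) :=
    ENNReal.measurable_ofReal.comp hKmeas
  have hKIoo : ∀ p ∉ A, ∀ u : ℝ, 0 ≤ u → u ≤ b →
      ∫⁻ s in Set.Ioo 0 u, ENNReal.ofReal (K s p) = ENNReal.ofReal (∫ s in (0:ℝ)..u, K s p) := by
    intro p hp u hu0 hub
    have hc : ∀ s ∈ Set.Icc (0:ℝ) u, (x - p) + s • v ≠ 0 := fun s hs =>
      hnotA p hp s ⟨hs.1, hs.2.trans hub⟩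
    have hcontK : ContinuousOn (fun s => K s p) (Set.Icc 0 u) := by
      simp only [hKdef]
      exact Stmt9Aux.continuousOn_KK hc
    have hint : IntegrableOn (fun s => K s p) (Set.Ioo 0 u) volume :=
      (hcontK.integrableOn_Icc).mono_set Set.Ioo_subset_Icc_self
    have hnn : 0 ≤ᵐ[volume.restrict (Set.Ioo 0 u)] fun s => K s p :=
      Filter.Eventually.of_forall fun s => by
        simp only [hKdef]; exact Stmt9Aux.KK_nonneg _ _ _
    rw [← ofReal_integral_eq_lintegral_ofReal hint hnn]
    congr 1
    rw [← MeasureTheory.integral_Ioc_eq_integral_Ioo, ← intervalIntegral.integral_of_le hu0]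
  have hKbnd : ∀ p ∉ A,
      ∫⁻ s in Set.Ioo 0 b, ENNReal.ofReal (K s p) ≤ ENNReal.ofReal (2 * ‖v‖) := by
    intro p hp
    rw [hKIoo p hp b hb.le le_rfl]
    apply ENNReal.ofReal_le_ofReal
    have hc : ∀ s ∈ Set.Icc (0:ℝ) b, (x - p) + s • v ≠ 0 := fun s hs => hnotA p hp s hs
    simp only [hKdef]
    exact Stmt9Aux.integral_KK_le hb.le hc
  have hswap : ∫⁻ s in Set.Ioo 0 b, L s ∂volume
      = ∫⁻ p in Aᶜ, (∫⁻ s in Set.Ioo 0 b, ENNReal.ofReal (K s p)) ∂μ :=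
    lintegral_lintegral_swap hKofReal.aemeasurable
  have hLfin : ∀ᵐ s ∂(volume.restrict (Set.Ioo 0 b)), L s < ⊤ := by
    apply ae_lt_top hLmeas
    rw [hswap]
    refine ne_of_lt (lt_of_le_of_lt (lintegral_mono_ae
      ((ae_restrict_iff' hAmeas.compl).mpr (Filter.Eventually.of_forall fun p hp =>
        hKbnd p hp))) ?_)
    rw [setLIntegral_const]
    exact ENNReal.mul_lt_top ENNReal.ofReal_lt_top (measure_lt_top μ _)
  have hLae : ∀ᵐ s ∂(volume.restrict (Set.Ioo 0 b)), ENNReal.ofReal (g s) = L s := by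
    filter_upwards [hLfin] with s hs
    rw [hgL s, ENNReal.ofReal_toReal hs.ne]
  -- the density part
  set T1 : ℝ≥0∞ := ∫⁻ s in Set.Ioo 0 t, ENNReal.ofReal (t - s) * ENNReal.ofReal (g s)
    with hT1def
  have hWmeas : Measurable (Function.uncurry fun (s : ℝ) p => ENNReal.ofReal ((t - s) * K s p)) :=
    (((measurable_const.sub measurable_fst).mul hKmeas)).ennreal_ofReal
  have hT1 : T1 = ∫⁻ p in Aᶜ, ENNReal.ofReal (R p) ∂μ := by
    have h1 : T1 = ∫⁻ s in Set.Ioo 0 t, ENNReal.ofReal (t - s) * L s := by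
      apply lintegral_congr_ae
      filter_upwards [ae_restrict_of_ae_restrict_of_subset hIoo_sub hLae] with s hs
      rw [hs]
    have h3 : T1 = ∫⁻ s in Set.Ioo 0 t, ∫⁻ p in Aᶜ, ENNReal.ofReal ((t - s) * K s p) ∂μ := by
      rw [h1]
      apply setLIntegral_congr_fun measurableSet_Ioo
      intro s hs
      rw [hLdef]
      beta_reduce
      rw [← lintegral_const_mul _ ((hKsmeas s).ennreal_ofReal)]
      apply lintegral_congr
      intro p
      rw [← ENNReal.ofReal_mul (sub_nonneg.mpr hs.2.le)]
    rw [h3, lintegral_lintegral_swap hWmeas.aemeasurable]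
    apply lintegral_congr_ae
    refine (ae_restrict_iff' hAmeas.compl).mpr ?_
    apply Filter.Eventually.of_forall
    intro p hp
    show ∫⁻ s in Set.Ioo 0 t, ENNReal.ofReal ((t - s) * K s p) ∂volume = ENNReal.ofReal (R p)
    have hc : ∀ s ∈ Set.Icc (0:ℝ) t, (x - p) + s • v ≠ 0 := fun s hs =>
      hnotA p hp s ⟨hs.1, hs.2.trans htb⟩
    have hcontK : ContinuousOn (fun s => (t - s) * K s p) (Set.Icc 0 t) := by
      simp only [hKdef]
      exact (continuous_const.sub continuous_id).continuousOn.mul (Stmt9Aux.continuousOn_KK hc)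
    have hint : IntegrableOn (fun s => (t - s) * K s p) (Set.Ioo 0 t) volume :=
      (hcontK.integrableOn_Icc).mono_set Set.Ioo_subset_Icc_self
    have hnn : 0 ≤ᵐ[volume.restrict (Set.Ioo 0 t)] fun s => (t - s) * K s p := by
      refine (ae_restrict_iff' measurableSet_Ioo).mpr ?_
      apply Filter.Eventually.of_forall
      intro s hs
      exact mul_nonneg (sub_nonneg.mpr hs.2.le)
        (by simp only [hKdef]; exact Stmt9Aux.KK_nonneg _ _ _)
    rw [← ofReal_integral_eq_lintegral_ofReal hint hnn]
    congr 1
    rw [← MeasureTheory.integral_Ioc_eq_integral_Ioo, ← intervalIntegral.integral_of_le ht0,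
      hRA p hp]
  have hT1fin : T1 ≠ ⊤ := by
    rw [hT1]
    refine ne_of_lt (lt_of_le_of_lt (lintegral_mono fun p =>
      ENNReal.ofReal_le_ofReal (le_trans (le_abs_self _) (hRbound p))) ?_)
    rw [setLIntegral_const]
    exact ENNReal.mul_lt_top ENNReal.ofReal_lt_top (measure_lt_top μ _)
  have hC7 : ∫ p in Aᶜ, R p ∂μ = T1.toReal := by
    rw [integral_eq_lintegral_of_nonneg_ae
      (Filter.Eventually.of_forall fun p => hRnonneg p) hRmeas.aestronglyMeasurable, hT1]
  -- the singular part
  set c2 : ℝ≥0∞ := ENNReal.ofReal (2 * ‖v‖) with hc2def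
  set T2 : ℝ≥0∞ := ∫⁻ p in At, ENNReal.ofReal (t - σ p) ∂μ with hT2def
  have hσAt : ∀ p ∈ At, 0 < σ p ∧ σ p < t := by
    intro p hp
    rw [hAt] at hp
    exact ⟨hp.2.1, hp.2.2⟩
  have hC8a : ∫ p in A, R p ∂μ = ∫ p in At, 2 * ‖v‖ * (t - σ p) ∂μ := by
    have hsplit := integral_inter_add_diff (μ := μ) (f := R) (s := A) hAtmeas hRint.integrableOn
    rw [Set.inter_eq_self_of_subset_right hAtsub] at hsplit
    have hzero : ∫ p in A \ At, R p ∂μ = 0 := by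
      rw [setIntegral_congr_fun (hAmeas.diff hAtmeas) hRA2]
      exact integral_zero _ _
    have hfirst : ∫ p in At, R p ∂μ = ∫ p in At, 2 * ‖v‖ * (t - σ p) ∂μ :=
      setIntegral_congr_fun hAtmeas hRA1
    rw [← hsplit, hzero, hfirst, add_zero]
  have hintT : Integrable (fun p => t - σ p) (μ.restrict At) := by
    apply Integrable.mono' (integrable_const (μ := μ.restrict At) t)
    · exact (measurable_const.sub hσmeas).aestronglyMeasurable
    · refine (ae_restrict_iff' hAtmeas).mpr ?_
      apply Filter.Eventually.of_forall
      intro p hp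
      obtain ⟨h1, h2⟩ := hσAt p hp
      rw [Real.norm_eq_abs, abs_of_nonneg (by linarith)]
      linarith
  have hnnT : 0 ≤ᵐ[μ.restrict At] fun p => t - σ p := by
    refine (ae_restrict_iff' hAtmeas).mpr ?_
    exact Filter.Eventually.of_forall fun p hp => sub_nonneg.mpr (hσAt p hp).2.le
  have hC8b : ∫ p in At, 2 * ‖v‖ * (t - σ p) ∂μ = (c2 * T2).toReal := by
    rw [integral_const_mul, integral_eq_lintegral_of_nonneg_ae hnnT
      (measurable_const.sub hσmeas).aestronglyMeasurable]
    rw [ENNReal.toReal_mul, hc2def, ENNReal.toReal_ofReal (by positivity)]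
  have hT2fin : c2 * T2 ≠ ⊤ := by
    apply ENNReal.mul_ne_top ENNReal.ofReal_ne_top
    refine ne_of_lt (lt_of_le_of_lt (lintegral_mono_ae
      (g := fun _ => ENNReal.ofReal t)
      ((ae_restrict_iff' hAtmeas).mpr (Filter.Eventually.of_forall fun p hp =>
        ENNReal.ofReal_le_ofReal (by linarith [(hσAt p hp).1])))) ?_)
    rw [setLIntegral_const]
    exact ENNReal.mul_lt_top ENNReal.ofReal_lt_top (measure_lt_top μ _)
  -- identification of ν
  set m2 : Measure ℝ := Measure.map σ (μ.restrict Ao) with hm2def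
  set νa : Measure ℝ :=
    (volume.restrict (Set.Ioo 0 b)).withDensity (fun s => ENNReal.ofReal (g s)) + c2 • m2
    with hνadef
  have hνeq : ν = νa := by
    ext B hB
    have hBset : (fun s : ℝ => x + s • v) '' (B ∩ Set.Ioo 0 b) = σ ⁻¹' B ∩ Ao := by
      rw [himg _ (Set.inter_subset_right.trans Set.Ioo_subset_Icc_self), hAo,
        Set.preimage_inter]
      apply Set.ext
      intro p
      simp only [Set.mem_inter_iff]
      tauto
    rw [hν B hB, hνadef, Measure.add_apply, Measure.smul_apply, smul_eq_mul,
      withDensity_apply _ hB, Measure.restrict_restrict hB, hm2def,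
      Measure.map_apply hσmeas hB, Measure.restrict_apply (hσmeas hB), hBset, hc2def]
  have hνI : ∫ s in Set.Ioo 0 t, (t - s) ∂ν = (T1 + c2 * T2).toReal := by
    rw [hνeq]
    have hnnν : 0 ≤ᵐ[νa.restrict (Set.Ioo 0 t)] fun s => t - s :=
      (ae_restrict_iff' measurableSet_Ioo).mpr
        (Filter.Eventually.of_forall fun s hs => sub_nonneg.mpr hs.2.le)
    have htsm' : Measurable fun s : ℝ => t - s := measurable_const.sub measurable_id
    have htsm : Measurable fun s : ℝ => ENNReal.ofReal (t - s) := htsm'.ennreal_ofReal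
    rw [integral_eq_lintegral_of_nonneg_ae hnnν htsm'.aestronglyMeasurable]
    congr 1
    rw [hνadef, Measure.restrict_add, lintegral_add_measure]
    congr 1
    · rw [restrict_withDensity measurableSet_Ioo,
        lintegral_withDensity_eq_lintegral_mul _ hgm.ennreal_ofReal htsm,
        Measure.restrict_restrict measurableSet_Ioo,
        Set.inter_eq_self_of_subset_left hIoo_sub]
      apply lintegral_congr
      intro s
      rw [Pi.mul_apply]
      exact mul_comm _ _
    · rw [Measure.restrict_smul, lintegral_smul_measure]
      congr 1
      rw [hm2def, Measure.restrict_map hσmeas measurableSet_Ioo,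
        lintegral_map htsm hσmeas,
        Measure.restrict_restrict (hσmeas measurableSet_Ioo)]
      have hset : σ ⁻¹' Set.Ioo 0 t ∩ Ao = At := by
        rw [hAo, hAt]
        ext p
        constructor
        · rintro ⟨hp1, hp2, hp3⟩
          exact ⟨hp2, hp1⟩
        · rintro ⟨hp1, hp2⟩
          exact ⟨hp2, hp1, hIoo_sub hp2⟩
      rw [hset]
  have hRsum : ∫ p, R p ∂μ = T1.toReal + (c2 * T2).toReal := by
    rw [← integral_add_compl hAmeas hRint, hC8a, hC8b, hC7]
    ring
  rw [hf (x + t • v), hf x, hνI, hmain, hDsum, hRsum,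
    ENNReal.toReal_add hT1fin hT2fin]
  ring
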